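/- (Gluing lemma, part 3) With notation as in the gluing setup, let σ be a density matrix on H_L ⊗ ℂ^B, v a unit vector in H_L ⊗ H_R with Schmidt decomposition v = Σ_{j=1}^B λ_j a_j ⊗ b_j, U_v the associated isometry, and σ' = (Id⊗U_v) σ (Id⊗U_v)*. Suppose H = H_L' + H_i + H_R' where H_L' acts only on H_L, H_R' acts only on H_R, and H_i acts only on the i-th qudit factor of H_L and H_R (with ‖H_i + H_R'‖ ≤ n). Then Tr(σ' H) ≤ Tr(σ (H_L' ⊗ Id)) + ⟨v, (H_R' + H_i) v⟩ + n · ‖Tr_{[1,…,i-1]}(σ) - cont(v)‖₁, where cont(v) := U_v Tr_{[1,…,i-1]}(|v⟩⟨v|) U_v* and ‖·‖₁ is the trace norm. -/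

import Mathlib

open scoped ComplexOrder Kronecker Matrix

/-- The trace norm (sum of singular values) of a square complex matrix. -/
noncomputable def traceNorm {n : Type*} [Fintype n] [DecidableEq n]
    (M : Matrix n n ℂ) : ℝ :=
  (((Matrix.posSemidef_conjTranspose_mul_self M).1.eigenvectorUnitary.1 *
      Matrix.diagonal (((↑) : ℝ → ℂ) ∘ (√·) ∘ (Matrix.posSemidef_conjTranspose_mul_self M).1.eigenvalues) *
      (star (Matrix.posSemidef_conjTranspose_mul_self M).1.eigenvectorUnitary : Matrix n n ℂ)).trace).re

/-- Partial trace over the first factor of `H_{[1,i-1]} ⊗ H_i ⊗ (third factor)`,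
in the matrix model with index type `(α × γ) × β`. -/
noncomputable def ptraceFirst {α γ β : Type*} [Fintype α]
    (M : Matrix ((α × γ) × β) ((α × γ) × β) ℂ) : Matrix (γ × β) (γ × β) ℂ :=
  Matrix.of fun x y => ∑ a, M ((a, x.1), x.2) ((a, y.1), y.2)

/-- Elementary tensor of two vectors, in the function model of a tensor product. -/
noncomputable def tens {α β : Type*} (a : α → ℂ) (b : β → ℂ) : α × β → ℂ :=
  fun x => a x.1 * b x.2

lemma kron_conjT {l m p q : Type*} (X : Matrix l m ℂ) (Y : Matrix p q ℂ) :
    (X ⊗ₖ Y)ᴴ = Xᴴ ⊗ₖ Yᴴ := by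
  ext ⟨i,j⟩ ⟨k,l⟩
  simp [Matrix.conjTranspose_apply, Matrix.kroneckerMap_apply]

lemma traceNorm_hermitian {m : Type*} [Fintype m] [DecidableEq m]
    (X : Matrix m m ℂ) (hX : X.IsHermitian) :
    traceNorm X = ∑ i, |hX.eigenvalues i| := by
  have hY : (Xᴴ * X).IsHermitian := (Matrix.posSemidef_conjTranspose_mul_self X).1
  have htr : ∀ (u : Matrix.unitaryGroup m ℂ) (D : Matrix m m ℂ),
      ((u : Matrix m m ℂ) * D * star (u : Matrix m m ℂ)).trace = D.trace := by
    intro u D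
    rw [Matrix.trace_mul_cycle, (Matrix.mem_unitaryGroup_iff').mp u.2, Matrix.one_mul]
  have h2 : cfc (fun x : ℝ => √x) (Xᴴ * X) = cfc (fun x : ℝ => |x|) X := by
    rw [hX.eq, ← pow_two, ← cfc_pow_id (R := ℝ) X 2 hX.isSelfAdjoint,
      ← cfc_comp (fun x : ℝ => √x) (fun x : ℝ => x ^ 2) X hX.isSelfAdjoint]
    congr 1
    funext x
    simp [Real.sqrt_sq_eq_abs]
  calc traceNorm X = (hY.cfc (fun x => √x)).trace.re := by
        rw [traceNorm, Matrix.IsHermitian.cfc, Unitary.conjStarAlgAut_apply, htr, htr]; rfl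
    _ = (hX.cfc (fun x => |x|)).trace.re := by rw [← hY.cfc_eq, h2, hX.cfc_eq]
    _ = ∑ i, |hX.eigenvalues i| := by
        rw [Matrix.IsHermitian.cfc, Unitary.conjStarAlgAut_apply, htr, Matrix.trace_diagonal,
          Complex.re_sum]
        simp

lemma trace_bound {m k : Type*} [Fintype m] [DecidableEq m] [Fintype k] [DecidableEq k]
    (n : ℝ) (X : Matrix m m ℂ) (hX : X.IsHermitian) (K : Matrix k k ℂ)
    (W : Matrix k m ℂ) (hW : Wᴴ * W = 1)
    (hK : ∀ w : k → ℂ, ‖(star w) ⬝ᵥ (K *ᵥ w)‖ ≤ n * ((star w) ⬝ᵥ w).re) :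
    (Matrix.trace (W * X * Wᴴ * K)).re ≤ n * traceNorm X := by
  set V : Matrix m m ℂ := (Matrix.IsHermitian.eigenvectorUnitary hX : Matrix m m ℂ) with hV
  have hVV : Vᴴ * V = 1 := by
    rw [← Matrix.star_eq_conjTranspose]
    exact (Matrix.mem_unitaryGroup_iff').mp (Matrix.IsHermitian.eigenvectorUnitary hX).2
  set A : Matrix k m ℂ := W * V with hA
  have hAA : Aᴴ * A = 1 := by
    rw [hA, Matrix.conjTranspose_mul, Matrix.mul_assoc, ← Matrix.mul_assoc Wᴴ W V, hW,
      Matrix.one_mul, hVV]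
  set N : Matrix m m ℂ := Aᴴ * (K * A) with hN
  have e1 : W * X * Wᴴ * K = A * ((Matrix.diagonal (RCLike.ofReal ∘ hX.eigenvalues) : Matrix m m ℂ) * (Aᴴ * K)) := by
    conv_lhs => rw [hX.spectral_theorem, Unitary.conjStarAlgAut_apply]
    rw [hA, Matrix.star_eq_conjTranspose, Matrix.conjTranspose_mul]
    simp only [Matrix.mul_assoc]
    rfl
  have e2 : Matrix.trace (W * X * Wᴴ * K) =
      Matrix.trace (Matrix.diagonal (RCLike.ofReal ∘ hX.eigenvalues) * N) := by
    rw [e1, Matrix.trace_mul_comm, hN]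
    simp only [Matrix.mul_assoc]
  have e3 : Matrix.trace (Matrix.diagonal (RCLike.ofReal ∘ hX.eigenvalues) * N) =
      ∑ i, (hX.eigenvalues i : ℂ) * N i i := by
    simp [Matrix.trace, Matrix.diag, Matrix.diagonal_mul]
  have hN1 : ∀ i, N i i = (star (fun x => A x i)) ⬝ᵥ (K *ᵥ (fun x => A x i)) := by
    intro i
    simp [hN, Matrix.mul_apply, Matrix.mulVec, dotProduct, Matrix.conjTranspose_apply]
  have hN2 : ∀ i, ((star (fun x => A x i)) ⬝ᵥ (fun x => A x i)).re = 1 := by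
    intro i
    have h := congrFun (congrFun hAA i) i
    simp only [Matrix.mul_apply, Matrix.conjTranspose_apply, Matrix.one_apply_eq] at h
    have : (star (fun x => A x i)) ⬝ᵥ (fun x => A x i) = 1 := by
      rw [← h]; simp [dotProduct]
    rw [this]; simp
  have hNb : ∀ i, ‖N i i‖ ≤ n := by
    intro i
    rw [hN1 i]
    calc ‖(star (fun x => A x i)) ⬝ᵥ (K *ᵥ (fun x => A x i))‖
        ≤ n * ((star (fun x => A x i)) ⬝ᵥ (fun x => A x i)).re := hK _
      _ = n := by rw [hN2 i, mul_one]
  rw [e2, e3]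
  have : (∑ i, (hX.eigenvalues i : ℂ) * N i i).re = ∑ i, hX.eigenvalues i * (N i i).re := by
    rw [Complex.re_sum]
    exact Finset.sum_congr rfl fun i _ => by simp [Complex.mul_re]
  rw [this, traceNorm_hermitian X hX, Finset.mul_sum]
  apply Finset.sum_le_sum
  intro i _
  calc hX.eigenvalues i * (N i i).re ≤ |hX.eigenvalues i * (N i i).re| := le_abs_self _
    _ = |hX.eigenvalues i| * |(N i i).re| := abs_mul _ _
    _ ≤ |hX.eigenvalues i| * ‖N i i‖ := by
        apply mul_le_mul_of_nonneg_left (Complex.abs_re_le_norm _) (abs_nonneg _)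
    _ ≤ |hX.eigenvalues i| * n := mul_le_mul_of_nonneg_left (hNb i) (abs_nonneg _)
    _ = n * |hX.eigenvalues i| := mul_comm _ _

lemma trace_G {α γ β : Type*} [Fintype α] [Fintype γ] [Fintype β] [DecidableEq α]
    (M : Matrix ((α × γ) × β) ((α × γ) × β) ℂ) (K : Matrix (γ × β) (γ × β) ℂ) :
    Matrix.trace (M * (Matrix.of fun x y =>
      if x.1.1 = y.1.1 then K (x.1.2, x.2) (y.1.2, y.2) else 0))
    = Matrix.trace (ptraceFirst M * K) := by
  simp only [Matrix.trace, Matrix.diag, Matrix.mul_apply, ptraceFirst, Matrix.of_apply,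
    Fintype.sum_prod_type, mul_ite, mul_zero, Finset.sum_ite_eq, Finset.mem_univ, if_true,
    Finset.sum_mul, Finset.mul_sum]
  simp only [Finset.sum_ite_irrel, Finset.sum_const_zero, Finset.sum_ite_eq, Finset.sum_ite_eq',
    Finset.mem_univ, if_true]
  rw [Finset.sum_comm]
  refine Finset.sum_congr rfl fun q _ => ?_
  rw [Finset.sum_comm]
  refine Finset.sum_congr rfl fun r _ => ?_
  rw [Finset.sum_comm]
  refine Finset.sum_congr rfl fun q' _ => ?_
  rw [Finset.sum_comm]

lemma ptraceFirst_conj {α γ β ρ : Type*} [Fintype α] [Fintype γ] [Fintype β] [Fintype ρ]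
    [DecidableEq α] [DecidableEq γ]
    (U : Matrix ρ β ℂ) (M : Matrix ((α × γ) × β) ((α × γ) × β) ℂ) :
    ptraceFirst (((1 : Matrix (α × γ) (α × γ) ℂ) ⊗ₖ U) * M *
        ((1 : Matrix (α × γ) (α × γ) ℂ) ⊗ₖ U)ᴴ)
    = ((1 : Matrix γ γ ℂ) ⊗ₖ U) * ptraceFirst M * ((1 : Matrix γ γ ℂ) ⊗ₖ U)ᴴ := by
  ext ⟨q, r⟩ ⟨q', r'⟩
  simp only [ptraceFirst, Matrix.of_apply, Matrix.mul_apply, Matrix.conjTranspose_apply,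
    Matrix.kroneckerMap_apply, Matrix.one_apply, Fintype.sum_prod_type, Prod.mk.injEq,
    ite_and, ite_mul, mul_ite, zero_mul, mul_zero, star_zero,
    apply_ite (starRingEnd ℂ), apply_ite (star : ℂ → ℂ), star_one,
    Finset.sum_ite_irrel, Finset.sum_const_zero, Finset.sum_ite_eq, Finset.sum_ite_eq',
    Finset.mem_univ, if_true, one_mul, mul_one, Finset.sum_mul, Finset.mul_sum]
  rw [Finset.sum_comm]
  refine Finset.sum_congr rfl fun b' _ => ?_
  rw [Finset.sum_comm]

lemma trace_vecMulVec {m : Type*} [Fintype m] (v w : m → ℂ) (M : Matrix m m ℂ) :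
    Matrix.trace (Matrix.vecMulVec v w * M) = w ⬝ᵥ (M *ᵥ v) := by
  simp only [Matrix.trace, Matrix.diag, Matrix.mul_apply, Matrix.vecMulVec_apply,
    dotProduct, Matrix.mulVec, Finset.mul_sum, Finset.sum_mul]
  rw [Finset.sum_comm]
  refine Finset.sum_congr rfl fun y _ => Finset.sum_congr rfl fun x _ => by ring

lemma ptraceFirst_conjTranspose {α γ β : Type*} [Fintype α]
    (M : Matrix ((α × γ) × β) ((α × γ) × β) ℂ) :
    (ptraceFirst M)ᴴ = ptraceFirst Mᴴ := by
  ext ⟨q, r⟩ ⟨q', r'⟩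
  simp [ptraceFirst, Matrix.conjTranspose_apply]

/-- Gluing lemma, part 3: with `σ` a density matrix on `H_L ⊗ ℂ^B`
(`H_L = H_{[1,i-1]} ⊗ H_i` modelled on index `Fin A × Fin Q`, `H_R` on `Fin R`),
`v ∈ H_L ⊗ H_R` a unit vector with Schmidt decomposition `v = Σ_j λ_j a_j ⊗ b_j`,
`U_v` the associated isometry and `σ' = (Id ⊗ U_v) σ (Id ⊗ U_v)ᴴ`: if
`H = H_L' + H_i + H_R'` with `H_L'` acting on `H_L`, `H_R'` on `H_R`, `H_i` on the
`i`-th qudit and the first qudit of `H_R`, and `‖H_i + H_R'‖ ≤ n`, then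
`Tr(σ' H) ≤ Tr(σ (H_L' ⊗ Id)) + ⟨v, (H_R' + H_i) v⟩ + n · ‖Tr_{[1..i-1]}(σ) - cont(v)‖₁`. -/
theorem gluing_part_three
    {A Q R B : ℕ} (n : ℝ)
    (a : Fin B → (Fin A × Fin Q → ℂ)) (b : Fin B → (Fin R → ℂ))
    (ha : ∀ j k : Fin B, (fun l => starRingEnd ℂ (a j l)) ⬝ᵥ a k = if j = k then 1 else 0)
    (hb : ∀ j k : Fin B, (fun r => starRingEnd ℂ (b j r)) ⬝ᵥ b k = if j = k then 1 else 0)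
    (lam : Fin B → ℝ) (hlam : ∀ j, 0 ≤ lam j)
    (hmono : ∀ j k : Fin B, j ≤ k → lam k ≤ lam j)
    (v : (Fin A × Fin Q) × Fin R → ℂ)
    (hv : v = ∑ j, (lam j : ℂ) • tens (a j) (b j))
    (hvunit : (star v) ⬝ᵥ v = 1)
    (U : Matrix (Fin R) (Fin B) ℂ) (hU : U = Matrix.of fun r j => b j r)
    (σ : Matrix ((Fin A × Fin Q) × Fin B) ((Fin A × Fin Q) × Fin B) ℂ)
    (hσpsd : σ.PosSemidef) (hσtr : σ.trace = 1)
    (σ' : Matrix ((Fin A × Fin Q) × Fin R) ((Fin A × Fin Q) × Fin R) ℂ)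
    (hσ' : σ' = ((1 : Matrix (Fin A × Fin Q) (Fin A × Fin Q) ℂ) ⊗ₖ U) * σ *
        ((1 : Matrix (Fin A × Fin Q) (Fin A × Fin Q) ℂ) ⊗ₖ U)ᴴ)
    (contv : Matrix (Fin Q × Fin B) (Fin Q × Fin B) ℂ)
    (hcontv : contv = ((1 : Matrix (Fin Q) (Fin Q) ℂ) ⊗ₖ Uᴴ) *
        ptraceFirst (Matrix.vecMulVec v (star v)) *
        ((1 : Matrix (Fin Q) (Fin Q) ℂ) ⊗ₖ U))
    (HL : Matrix (Fin A × Fin Q) (Fin A × Fin Q) ℂ) (hHL : HL.IsHermitian)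
    (HR : Matrix (Fin R) (Fin R) ℂ) (hHR : HR.IsHermitian)
    (Hi : Matrix (Fin Q × Fin R) (Fin Q × Fin R) ℂ) (hHi : Hi.IsHermitian)
    (HiFull : Matrix ((Fin A × Fin Q) × Fin R) ((Fin A × Fin Q) × Fin R) ℂ)
    (hHiFull : HiFull = Matrix.of fun x y =>
        if x.1.1 = y.1.1 then Hi (x.1.2, x.2) (y.1.2, y.2) else 0)
    (Hfull : Matrix ((Fin A × Fin Q) × Fin R) ((Fin A × Fin Q) × Fin R) ℂ)
    (hHfull : Hfull = HL ⊗ₖ (1 : Matrix (Fin R) (Fin R) ℂ) +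
        (1 : Matrix (Fin A × Fin Q) (Fin A × Fin Q) ℂ) ⊗ₖ HR + HiFull)
    (hnorm : ∀ w : Fin Q × Fin R → ℂ,
        ‖(star w) ⬝ᵥ ((Hi + (1 : Matrix (Fin Q) (Fin Q) ℂ) ⊗ₖ HR) *ᵥ w)‖ ≤
          n * ((star w) ⬝ᵥ w).re) :
    (Matrix.trace (σ' * Hfull)).re ≤
      (Matrix.trace (σ * (HL ⊗ₖ (1 : Matrix (Fin B) (Fin B) ℂ)))).re +
      ((star v) ⬝ᵥ
        (((1 : Matrix (Fin A × Fin Q) (Fin A × Fin Q) ℂ) ⊗ₖ HR + HiFull) *ᵥ v)).re +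
      n * traceNorm (ptraceFirst σ - contv) := by
  set W : Matrix ((Fin A × Fin Q) × Fin R) ((Fin A × Fin Q) × Fin B) ℂ :=
    (1 : Matrix (Fin A × Fin Q) (Fin A × Fin Q) ℂ) ⊗ₖ U with hWdef
  set W2 : Matrix (Fin Q × Fin R) (Fin Q × Fin B) ℂ :=
    (1 : Matrix (Fin Q) (Fin Q) ℂ) ⊗ₖ U with hW2def
  set K : Matrix (Fin Q × Fin R) (Fin Q × Fin R) ℂ :=
    Hi + (1 : Matrix (Fin Q) (Fin Q) ℂ) ⊗ₖ HR with hKdef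
  set P : Matrix (Fin Q × Fin R) (Fin Q × Fin R) ℂ :=
    ptraceFirst (Matrix.vecMulVec v (star v)) with hPdef
  set X : Matrix (Fin Q × Fin B) (Fin Q × Fin B) ℂ := ptraceFirst σ - contv with hXdef
  -- U is an isometry
  have hUU : Uᴴ * U = (1 : Matrix (Fin B) (Fin B) ℂ) := by
    ext j k
    have h := hb j k
    simp only [dotProduct] at h
    simp only [Matrix.mul_apply, Matrix.conjTranspose_apply, hU, Matrix.of_apply,
      Matrix.one_apply, Complex.star_def, h]
  have hW2iso : W2ᴴ * W2 = 1 := by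
    rw [hW2def, kron_conjT, Matrix.conjTranspose_one, ← Matrix.mul_kronecker_mul,
      Matrix.one_mul, hUU, Matrix.one_kronecker_one]
  -- U * Uᴴ fixes each b j
  have hProj : ∀ j r, (∑ s, (U * Uᴴ) r s * b j s) = b j r := by
    intro j r
    have hsum : ∀ k : Fin B, (∑ s, b k r * star (b k s) * b j s) =
        if k = j then b k r else 0 := by
      intro k
      have h1 : (∑ s, b k r * star (b k s) * b j s)
          = b k r * ∑ s, starRingEnd ℂ (b k s) * b j s := by
        rw [Finset.mul_sum]
        exact Finset.sum_congr rfl fun s _ => by rw [Complex.star_def]; ring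
      rw [h1, show (∑ s, starRingEnd ℂ (b k s) * b j s) = if k = j then (1:ℂ) else 0 from hb k j]
      split <;> simp
    calc (∑ s, (U * Uᴴ) r s * b j s)
        = ∑ s, ∑ k, b k r * star (b k s) * b j s := by
          refine Finset.sum_congr rfl fun s _ => ?_
          rw [Matrix.mul_apply, Finset.sum_mul]
          exact Finset.sum_congr rfl fun k _ => by
            simp [hU, Matrix.conjTranspose_apply]
      _ = ∑ k, ∑ s, b k r * star (b k s) * b j s := by rw [Finset.sum_comm]
      _ = ∑ k, if k = j then b k r else 0 := Finset.sum_congr rfl fun k _ => hsum k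
      _ = b j r := by simp
  -- U * Uᴴ fixes v in the R-slot
  have hbU : ∀ (x : Fin A × Fin Q) (r : Fin R),
      (∑ s, (U * Uᴴ) r s * v (x, s)) = v (x, r) := by
    intro x r
    simp only [hv, Finset.sum_apply, Pi.smul_apply, tens, smul_eq_mul]
    simp only [Finset.mul_sum]
    rw [Finset.sum_comm]
    refine Finset.sum_congr rfl fun j _ => ?_
    have h1 : (∑ s, (U * Uᴴ) r s * ((lam j : ℂ) * (a j x * b j s)))
        = (lam j : ℂ) * a j x * ∑ s, (U * Uᴴ) r s * b j s := by
      rw [Finset.mul_sum]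
      exact Finset.sum_congr rfl fun s _ => by ring
    rw [h1, hProj j r]
    ring
  -- projection invariance of P
  have hP1 : ((1 : Matrix (Fin Q) (Fin Q) ℂ) ⊗ₖ (U * Uᴴ)) * P = P := by
    ext ⟨q, r⟩ ⟨q', r'⟩
    simp only [hPdef, ptraceFirst, Matrix.of_apply, Matrix.mul_apply,
      Matrix.kroneckerMap_apply, Matrix.one_apply, Fintype.sum_prod_type, ite_mul, zero_mul,
      Finset.sum_ite_irrel, Finset.sum_const_zero, Finset.sum_ite_eq, Finset.mem_univ, if_true,
      Matrix.vecMulVec_apply, Pi.star_apply]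
    simp only [one_mul, ← Matrix.mul_apply]
    simp only [Finset.mul_sum]
    rw [Finset.sum_comm]
    refine Finset.sum_congr rfl fun aa _ => ?_
    have h1 : (∑ s, (U * Uᴴ) r s * (v ((aa, q), s) * star (v ((aa, q'), r'))))
        = (∑ s, (U * Uᴴ) r s * v ((aa, q), s)) * star (v ((aa, q'), r')) := by
      rw [Finset.sum_mul]
      exact Finset.sum_congr rfl fun s _ => by ring
    rw [h1, hbU (aa, q) r]
  have hvv : (Matrix.vecMulVec v (star v))ᴴ = Matrix.vecMulVec v (star v) := by
    ext x y
    simp only [Matrix.conjTranspose_apply, Matrix.vecMulVec_apply, Pi.star_apply, star_mul,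
      star_star]
  have hPH : Pᴴ = P := by rw [hPdef, ptraceFirst_conjTranspose, hvv]
  have hKH : ((1 : Matrix (Fin Q) (Fin Q) ℂ) ⊗ₖ (U * Uᴴ))ᴴ
      = (1 : Matrix (Fin Q) (Fin Q) ℂ) ⊗ₖ (U * Uᴴ) := by
    rw [kron_conjT, Matrix.conjTranspose_one, Matrix.conjTranspose_mul,
      Matrix.conjTranspose_conjTranspose]
  have hP2 : P * ((1 : Matrix (Fin Q) (Fin Q) ℂ) ⊗ₖ (U * Uᴴ)) = P := by
    have h := congrArg Matrix.conjTranspose hP1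
    rwa [Matrix.conjTranspose_mul, hKH, hPH] at h
  -- cont(v) conjugated back gives P
  have hcont : W2 * contv * W2ᴴ = P := by
    rw [hcontv, hW2def, kron_conjT, Matrix.conjTranspose_one]
    have assoc : ((1 : Matrix (Fin Q) (Fin Q) ℂ) ⊗ₖ U) *
        (((1 : Matrix (Fin Q) (Fin Q) ℂ) ⊗ₖ Uᴴ) * P * ((1 : Matrix (Fin Q) (Fin Q) ℂ) ⊗ₖ U)) *
        ((1 : Matrix (Fin Q) (Fin Q) ℂ) ⊗ₖ Uᴴ)
        = (((1 : Matrix (Fin Q) (Fin Q) ℂ) ⊗ₖ U) * ((1 : Matrix (Fin Q) (Fin Q) ℂ) ⊗ₖ Uᴴ)) * P *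
          (((1 : Matrix (Fin Q) (Fin Q) ℂ) ⊗ₖ U) * ((1 : Matrix (Fin Q) (Fin Q) ℂ) ⊗ₖ Uᴴ)) := by
      simp only [Matrix.mul_assoc]
    rw [assoc, ← Matrix.mul_kronecker_mul, Matrix.one_mul, hP1, hP2]
  -- first term
  have t1 : Matrix.trace (σ' * (HL ⊗ₖ (1 : Matrix (Fin R) (Fin R) ℂ)))
      = Matrix.trace (σ * (HL ⊗ₖ (1 : Matrix (Fin B) (Fin B) ℂ))) := by
    rw [hσ']
    rw [show W * σ * Wᴴ * (HL ⊗ₖ (1 : Matrix (Fin R) (Fin R) ℂ))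
        = W * (σ * (Wᴴ * (HL ⊗ₖ (1 : Matrix (Fin R) (Fin R) ℂ)))) from by
      simp only [Matrix.mul_assoc]]
    rw [Matrix.trace_mul_comm]
    rw [show σ * (Wᴴ * (HL ⊗ₖ (1 : Matrix (Fin R) (Fin R) ℂ))) * W
        = σ * (Wᴴ * (HL ⊗ₖ (1 : Matrix (Fin R) (Fin R) ℂ)) * W) from by
      simp only [Matrix.mul_assoc]]
    congr 2
    rw [hWdef, kron_conjT, Matrix.conjTranspose_one, ← Matrix.mul_kronecker_mul,
      ← Matrix.mul_kronecker_mul, Matrix.one_mul, Matrix.mul_one, Matrix.mul_one, hUU]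
  -- the "G" decomposition
  have hGd : (1 : Matrix (Fin A × Fin Q) (Fin A × Fin Q) ℂ) ⊗ₖ HR + HiFull
      = Matrix.of (fun x y => if x.1.1 = y.1.1 then K (x.1.2, x.2) (y.1.2, y.2) else 0) := by
    ext ⟨⟨a1, q⟩, r⟩ ⟨⟨a2, q'⟩, r'⟩
    simp only [Matrix.add_apply, Matrix.kroneckerMap_apply, Matrix.one_apply, hHiFull,
      Matrix.of_apply, Prod.mk.injEq, ite_and, hKdef]
    by_cases h : a1 = a2 <;>
      simp [h, Matrix.add_apply, Matrix.kroneckerMap_apply, Matrix.one_apply, add_comm]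
  -- Hermitian-ness of X
  have hXh : X.IsHermitian := by
    have h1 : (ptraceFirst σ).IsHermitian :=
      (ptraceFirst_conjTranspose σ).trans (congrArg ptraceFirst hσpsd.1)
    have h2 : contv.IsHermitian := by
      show contvᴴ = contv
      rw [hcontv, Matrix.conjTranspose_mul, Matrix.conjTranspose_mul, kron_conjT, kron_conjT,
        Matrix.conjTranspose_one, Matrix.conjTranspose_conjTranspose, hPH]
      simp only [Matrix.mul_assoc]
      rfl
    exact h1.sub h2
  -- trace computations
  have t2 : Matrix.trace (σ' * ((1 : Matrix (Fin A × Fin Q) (Fin A × Fin Q) ℂ) ⊗ₖ HR + HiFull))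
      = Matrix.trace (ptraceFirst σ' * K) := by
    rw [hGd]; exact trace_G σ' K
  have t3 : ptraceFirst σ' = W2 * ptraceFirst σ * W2ᴴ := by
    rw [hσ', hWdef, hW2def]; exact ptraceFirst_conj U σ
  have t4 : (star v) ⬝ᵥ (((1 : Matrix (Fin A × Fin Q) (Fin A × Fin Q) ℂ) ⊗ₖ HR + HiFull) *ᵥ v)
      = Matrix.trace (P * K) := by
    rw [← trace_vecMulVec v (star v), hGd, trace_G]
  have t6 : W2 * ptraceFirst σ * W2ᴴ * K = W2 * contv * W2ᴴ * K + W2 * X * W2ᴴ * K := by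
    rw [hXdef]
    simp only [Matrix.mul_sub, Matrix.sub_mul]
    abel
  have key : Matrix.trace (σ' * Hfull)
      = Matrix.trace (σ * (HL ⊗ₖ (1 : Matrix (Fin B) (Fin B) ℂ)))
        + (star v) ⬝ᵥ (((1 : Matrix (Fin A × Fin Q) (Fin A × Fin Q) ℂ) ⊗ₖ HR + HiFull) *ᵥ v)
        + Matrix.trace (W2 * X * W2ᴴ * K) := by
    rw [hHfull, add_assoc, Matrix.mul_add, Matrix.trace_add, t1, t2, t3, t6, Matrix.trace_add,
      show W2 * contv * W2ᴴ * K = P * K from by rw [hcont], ← t4, add_assoc]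
  rw [key]
  simp only [Complex.add_re]
  have hfin := trace_bound n X hXh K W2 hW2iso hnorm
  linarith [hfin]
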